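/- Fix b ∈ ℝ and ω > 0. Let t ∈ ℝ with sin(ωt) ≠ 0, let y ∈ ℝ² with y ≠ 0, let x ∈ ℝ², and set η_* := A(y) + (ω/sin(ωt))·(x − cos(ωt)·y). Then ((cos(2ωt) − 1)/2)·(y·η_*) + (sin(2ωt)/(4ω))·(|η_* − A(y)|² − ω²|y|²) = (ω/(2 sin(ωt)))·(cos(ωt)·(|x|² + |y|²) − 2 x·y). (This identifies the non-winding part of the action at the stationary point with the Mehler phase.) -/

import Mathlib

noncomputable def A (b : ℝ) (x : ℝ × ℝ) : ℝ × ℝ :=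
  (-b * x.2 / (x.1 ^ 2 + x.2 ^ 2), b * x.1 / (x.1 ^ 2 + x.2 ^ 2))

def wedge (u v : ℝ × ℝ) : ℝ := u.1 * v.2 - u.2 * v.1
def dot (u v : ℝ × ℝ) : ℝ := u.1 * v.1 + u.2 * v.2
def normSq2 (u : ℝ × ℝ) : ℝ := u.1 ^ 2 + u.2 ^ 2

noncomputable def traj (b ω : ℝ) (y η : ℝ × ℝ) (t : ℝ) : ℝ × ℝ :=
  Real.cos (ω * t) • y + (Real.sin (ω * t) / ω) • (η - A b y)

theorem mehler_phase (b ω : ℝ) (hω : 0 < ω)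
    (t : ℝ) (hst : Real.sin (ω * t) ≠ 0)
    (y : ℝ × ℝ) (hy : y ≠ 0) (x : ℝ × ℝ) :
    ((Real.cos (2 * ω * t) - 1) / 2) *
        dot y (A b y + (ω / Real.sin (ω * t)) • (x - Real.cos (ω * t) • y)) +
      (Real.sin (2 * ω * t) / (4 * ω)) *
        (normSq2 ((A b y + (ω / Real.sin (ω * t)) • (x - Real.cos (ω * t) • y))
            - A b y) - ω ^ 2 * normSq2 y) =
      (ω / (2 * Real.sin (ω * t))) *
        (Real.cos (ω * t) * (normSq2 x + normSq2 y) - 2 * dot x y) := by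
  have hy2 : y.1 ^ 2 + y.2 ^ 2 ≠ 0 := by
    intro h
    apply hy
    have h1 : y.1 = 0 := by nlinarith [sq_nonneg y.1, sq_nonneg y.2]
    have h2 : y.2 = 0 := by nlinarith [sq_nonneg y.1, sq_nonneg y.2]
    exact Prod.ext h1 h2
  have h2t : 2 * ω * t = 2 * (ω * t) := by ring
  rw [h2t, Real.cos_two_mul, Real.sin_two_mul, add_sub_cancel_left]
  have hA : dot y (A b y) = 0 := by
    simp only [dot, A]
    field_simp
    ring
  have hdA : ∀ v : ℝ × ℝ, dot y (A b y + v) = dot y v := by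
    intro v
    simp only [dot, A, Prod.fst_add, Prod.snd_add] at hA ⊢
    linarith [hA]
  rw [hdA]
  have hs2 : Real.sin (ω * t) ^ 2 = 1 - Real.cos (ω * t) ^ 2 := Real.sin_sq _
  set s := Real.sin (ω * t)
  set c := Real.cos (ω * t)
  simp only [dot, normSq2, Prod.smul_fst, Prod.smul_snd,
    Prod.fst_sub, Prod.snd_sub, smul_eq_mul]
  field_simp
  linear_combination (-4 * c * (y.1 ^ 2 + y.2 ^ 2)) * hs2
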